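/- Suppose N, N̄ : [0,∞) → ℝ are continuous, f : [0,∞) → [0,∞) is continuous, g : [0,∞) → ℝ is continuous, N(t) ≤ ∫₀^t f(a) N(t-a) da + g(t) for all t ≥ 0, and N̄ satisfies the renewal equation N̄(t) = ∫₀^t f(a) N̄(t-a) da + g(t) with N̄(0) = g(0) ≥ N(0). Then N(t) ≤ N̄(t) for all t ≥ 0. -/

import Mathlib

/-- comparison principle for Volterra renewal inequalities with
nonnegative kernel. -/
theorem stmt_19 (N Nbar f g : ℝ → ℝ)
    (hNc : Continuous N) (hNbarc : Continuous Nbar)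
    (hfc : Continuous f) (hgc : Continuous g)
    (hfn : ∀ a ≥ (0 : ℝ), 0 ≤ f a)
    (hineq : ∀ t ≥ (0 : ℝ), N t ≤ (∫ a in (0 : ℝ)..t, f a * N (t - a)) + g t)
    (heq : ∀ t ≥ (0 : ℝ), Nbar t = (∫ a in (0 : ℝ)..t, f a * Nbar (t - a)) + g t)
    (hN0 : N 0 ≤ g 0) :
    ∀ t ≥ (0 : ℝ), N t ≤ Nbar t := by
  intro T hT
  -- D = N - Nbar, u = D⁺, v = ∫₀^t u
  set D : ℝ → ℝ := fun t => N t - Nbar t with hD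
  have hDc : Continuous D := hNc.sub hNbarc
  set u : ℝ → ℝ := fun t => max (D t) 0 with hu
  have huc : Continuous u := hDc.max continuous_const
  have hun : ∀ t, 0 ≤ u t := fun t => le_max_right _ _
  set v : ℝ → ℝ := fun t => ∫ s in (0:ℝ)..t, u s with hv
  have hvd : ∀ t : ℝ, HasDerivAt v (u t) t := by
    intro t
    exact intervalIntegral.integral_hasDerivAt_right
      (huc.intervalIntegrable _ _)
      (huc.stronglyMeasurableAtFilter _ _)
      huc.continuousAt
  have hvc : Continuous v := by
    rw [continuous_iff_continuousAt]
    exact fun t => (hvd t).continuousAt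
  have hvn : ∀ t ≥ (0:ℝ), 0 ≤ v t := by
    intro t ht
    exact intervalIntegral.integral_nonneg ht (fun s _ => hun s)
  -- bound K for f on [0, T]
  obtain ⟨K, hK⟩ := (isCompact_Icc (a := (0:ℝ)) (b := T)).exists_bound_of_continuousOn
    hfc.continuousOn
  have hK0 : 0 ≤ K := le_trans (norm_nonneg _) (hK 0 ⟨le_refl _, hT⟩)
  -- key: for t ∈ [0,T], u t ≤ K * v t
  have hkey : ∀ t ∈ Set.Icc (0:ℝ) T, D t ≤ K * v t := by
    intro t ht
    have ht0 : (0:ℝ) ≤ t := ht.1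
    have i1 : IntervalIntegrable (fun a => f a * N (t - a)) MeasureTheory.volume 0 t :=
      (hfc.mul (hNc.comp (continuous_const.sub continuous_id))).intervalIntegrable _ _
    have i2 : IntervalIntegrable (fun a => f a * Nbar (t - a)) MeasureTheory.volume 0 t :=
      (hfc.mul (hNbarc.comp (continuous_const.sub continuous_id))).intervalIntegrable _ _
    have i3 : IntervalIntegrable (fun a => f a * D (t - a)) MeasureTheory.volume 0 t :=
      (hfc.mul (hDc.comp (continuous_const.sub continuous_id))).intervalIntegrable _ _
    have i4 : IntervalIntegrable (fun a => f a * u (t - a)) MeasureTheory.volume 0 t :=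
      (hfc.mul (huc.comp (continuous_const.sub continuous_id))).intervalIntegrable _ _
    have i5 : IntervalIntegrable (fun a => K * u (t - a)) MeasureTheory.volume 0 t :=
      (continuous_const.mul (huc.comp (continuous_const.sub continuous_id))).intervalIntegrable _ _
    have hsub : (∫ a in (0:ℝ)..t, f a * D (t - a))
        = (∫ a in (0:ℝ)..t, f a * N (t - a)) - ∫ a in (0:ℝ)..t, f a * Nbar (t - a) := by
      rw [← intervalIntegral.integral_sub i1 i2]
      apply intervalIntegral.integral_congr
      intro a _
      simp [hD]; ring
    have h1 : D t ≤ ∫ a in (0:ℝ)..t, f a * D (t - a) := by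
      have := hineq t ht0
      have := heq t ht0
      simp only [hD]
      rw [hsub]
      linarith
    have h2 : (∫ a in (0:ℝ)..t, f a * D (t - a)) ≤ ∫ a in (0:ℝ)..t, f a * u (t - a) := by
      apply intervalIntegral.integral_mono_on ht0 i3 i4
      intro a ha
      exact mul_le_mul_of_nonneg_left (le_max_left _ _) (hfn a ha.1)
    have h3 : (∫ a in (0:ℝ)..t, f a * u (t - a)) ≤ ∫ a in (0:ℝ)..t, K * u (t - a) := by
      apply intervalIntegral.integral_mono_on ht0 i4 i5
      intro a ha
      exact mul_le_mul_of_nonneg_right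
        (le_trans (le_abs_self _) (hK a ⟨ha.1, le_trans ha.2 ht.2⟩)) (hun _)
    have h4 : (∫ a in (0:ℝ)..t, K * u (t - a)) = K * v t := by
      rw [intervalIntegral.integral_const_mul]
      congr 1
      have := intervalIntegral.integral_comp_sub_left (a := (0:ℝ)) (b := t) u t
      simp [hv]
    linarith
  have hukey : ∀ t ∈ Set.Icc (0:ℝ) T, u t ≤ K * v t := by
    intro t ht
    exact max_le (hkey t ht) (mul_nonneg hK0 (hvn t ht.1))
  -- Grönwall
  have hgron := norm_le_gronwallBound_of_norm_deriv_right_le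
    (f := v) (f' := u) (δ := 0) (K := K) (ε := 0) (a := 0) (b := T)
    hvc.continuousOn
    (fun t _ => (hvd t).hasDerivWithinAt)
    (by simp [hv])
    (by
      intro t ht
      have ht' : t ∈ Set.Icc (0:ℝ) T := ⟨ht.1, le_of_lt ht.2⟩
      rw [Real.norm_of_nonneg (hun t), Real.norm_of_nonneg (hvn t ht.1)]
      linarith [hukey t ht'])
  have hvT : v T = 0 := by
    have := hgron T ⟨hT, le_refl _⟩
    rw [gronwallBound_ε0] at this
    have h0 : ‖v T‖ ≤ 0 := by simpa using this
    have := norm_nonneg (v T)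
    have : ‖v T‖ = 0 := le_antisymm h0 this
    simpa using this
  have := hkey T ⟨hT, le_refl _⟩
  rw [hvT] at this
  simp only [hD] at this
  linarith
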